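/- Suppose that for all positive integers I and J, every set A of positive integers with |A| = H(I, J) contains I pairwise disjoint J-element subsets each of which is a Golomb ruler. Then for all integers I ≥ 1 and J ≥ 3 one has H(I+1, J) ≤ H(I, J) + J. (Theorem 2: Conjecture 1 implies Conjecture 2.) -/

import Mathlib

/-- A finite set of naturals is a Golomb ruler if all differences of pairs of
distinct elements are distinct. -/
def IsGolomb (S : Finset ℕ) : Prop :=
  ∀ a ∈ S, ∀ b ∈ S, ∀ c ∈ S, ∀ d ∈ S, a ≠ b → c ≠ d →
    (a : ℤ) - (b : ℤ) = (c : ℤ) - (d : ℤ) → a = c ∧ b = d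

/-- `A` contains `I` pairwise disjoint `J`-element Golomb rulers. -/
def ContainsDGR (I J : ℕ) (A : Finset ℕ) : Prop :=
  ∃ f : Fin I → Finset ℕ,
    (∀ i, (f i).card = J ∧ f i ⊆ A ∧ IsGolomb (f i)) ∧
    ∀ i j, i ≠ j → Disjoint (f i) (f j)

/-- There is an `(I,J,n)`-DGR: `I` pairwise disjoint `J`-element Golomb rulers,
each a subset of `{1, 2, ..., n}`. -/
def HasDGR (I J n : ℕ) : Prop := ContainsDGR I J (Finset.Icc 1 n)

/-- `H I J` is the least positive `n` such that an `(I,J,n)`-DGR exists. -/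
noncomputable def H (I J : ℕ) : ℕ := sInf {n : ℕ | 0 < n ∧ HasDGR I J n}

lemma golomb_shift (S : Finset ℕ) (t : ℕ) (h : IsGolomb S) :
    IsGolomb (S.image (· + t)) := by
  intro a ha b hb c hc d hd hab hcd heq
  simp only [Finset.mem_image] at ha hb hc hd
  obtain ⟨a', ha', rfl⟩ := ha
  obtain ⟨b', hb', rfl⟩ := hb
  obtain ⟨c', hc', rfl⟩ := hc
  obtain ⟨d', hd', rfl⟩ := hd
  push_cast at heq
  have := h a' ha' b' hb' c' hc' d' hd' (by omega) (by omega) (by omega)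
  omega

theorem conj1_implies_conj2
    (hconj1 : ∀ I J : ℕ, 1 ≤ I → 1 ≤ J →
      ∀ A : Finset ℕ, (∀ a ∈ A, 0 < a) → A.card = H I J → ContainsDGR I J A) :
    ∀ I J : ℕ, 1 ≤ I → 3 ≤ J → H (I + 1) J ≤ H I J + J := by
  intro I J hI hJ
  set n := H I J with hn
  have hJ1 : 1 ≤ J := by omega
  -- Conjecture 1 applied to {1,...,n}
  obtain ⟨f, hf, hfd⟩ := hconj1 I J hI hJ1 (Finset.Icc 1 n)
    (fun a ha => (Finset.mem_Icc.mp ha).1) (by simp [hn])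
  -- the shifted ruler G
  set G : Finset ℕ := (f ⟨0, by omega⟩).image (· + J) with hG
  have hGcard : G.card = J := by
    rw [hG, Finset.card_image_of_injective _ (add_left_injective J),
      (hf ⟨0, by omega⟩).1]
  have hGsub : G ⊆ Finset.Icc 1 (n + J) := by
    intro x hx
    simp only [hG, Finset.mem_image] at hx
    obtain ⟨a, ha, rfl⟩ := hx
    have := Finset.mem_Icc.mp ((hf ⟨0, by omega⟩).2.1 ha)
    simp only [Finset.mem_Icc]; omega
  have hGgolomb : IsGolomb G := golomb_shift _ _ (hf ⟨0, by omega⟩).2.2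
  -- Conjecture 1 applied to {1,...,n+J} \ G
  set A : Finset ℕ := Finset.Icc 1 (n + J) \ G with hA
  have hAcard : A.card = n := by
    rw [hA, Finset.card_sdiff_of_subset hGsub, hGcard]
    simp
  obtain ⟨g, hg, hgd⟩ := hconj1 I J hI hJ1 A
    (fun a ha => (Finset.mem_Icc.mp (Finset.mem_sdiff.mp ha).1).1) hAcard
  have hAsub : A ⊆ Finset.Icc 1 (n + J) := Finset.sdiff_subset
  have hAG : Disjoint A G := Finset.sdiff_disjoint
  -- combine into I+1 rulers
  have hdgr : HasDGR (I + 1) J (n + J) := by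
    refine ⟨fun i => if h : (i : ℕ) < I then g ⟨i, h⟩ else G, ?_, ?_⟩
    · intro i
      by_cases h : (i : ℕ) < I
      · simp only [h, dif_pos]
        exact ⟨(hg _).1, (hg _).2.1.trans hAsub, (hg _).2.2⟩
      · simp only [h, dif_neg]
        exact ⟨hGcard, hGsub, hGgolomb⟩
    · intro i j hij
      by_cases hi : (i : ℕ) < I <;> by_cases hj : (j : ℕ) < I <;>
        simp only [hi, hj, dif_pos, dif_neg, not_false_iff]
      · exact hgd _ _ (by simpa [Fin.ext_iff] using fun h => hij (Fin.ext h))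
      · exact Finset.disjoint_of_subset_left ((hg _).2.1) hAG
      · exact Finset.disjoint_of_subset_right ((hg _).2.1) hAG.symm
      · exact absurd (Fin.ext (by omega)) hij
  exact Nat.sInf_le ⟨by omega, hdgr⟩
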